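/- Let q be a prime. For each q-th root of unity ξ ∈ k, the map α_ξ : (Z/q × Z/q)² → kˣ defined by α_ξ((i,j),(i',j')) = ξ^{j̄·ī'} is a 2-cocycle on Z/q × Z/q with values in kˣ; moreover α_ξ and α_{ξ'} are cohomologous if and only if ξ = ξ', and every 2-cocycle on Z/q × Z/q with values in kˣ is cohomologous to α_ξ for some q-th root of unity ξ. Hence ξ ↦ [α_ξ] is a group isomorphism from the group of q-th roots of unity in k onto H²(Z/q × Z/q, kˣ). -/

import Mathlib

/-- A 2-cocycle on an additive group `A` with values in `kˣ` (trivial action). -/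
def IsAddCocycle2 {k : Type*} [Field k] {A : Type*} [AddGroup A] (β : A → A → kˣ) : Prop :=
  ∀ x y z : A, β y z * β x (y + z) = β (x + y) z * β x y

/-- A 2-coboundary on an additive group `A` with values in `kˣ`. -/
def IsAddCoboundary2 {k : Type*} [Field k] {A : Type*} [AddGroup A] (β : A → A → kˣ) : Prop :=
  ∃ f : A → kˣ, ∀ x y : A, β x y = f x * f y * (f (x + y))⁻¹

/-- Two 2-cocycles are cohomologous if their pointwise quotient is a coboundary. -/
def AddCohomologous2 {k : Type*} [Field k] {A : Type*} [AddGroup A]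
    (β β' : A → A → kˣ) : Prop :=
  IsAddCoboundary2 (fun x y => β x y * (β' x y)⁻¹)

/-- The 2-cocycle `α_ξ((i,j),(i',j')) = ξ^{j̄·ī'}` on `Z/q × Z/q` associated to a
`q`-th root of unity `ξ`, bars denoting representatives in `{0,…,q−1}`. -/
def alphaXi {k : Type*} [Field k] (q : ℕ) (ξ : kˣ) :
    ZMod q × ZMod q → ZMod q × ZMod q → kˣ :=
  fun x y => ξ ^ (x.2.val * y.1.val)

section Aux

variable {k : Type*} [Field k]

private lemma uext {a b : kˣ} (h : (a : k) = (b : k)) : a = b := Units.ext h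

structure ExtEl (k : Type*) [Field k] (A : Type*) where
  c : kˣ
  a : A

variable {A : Type*} [AddCommGroup A]

lemma ExtEl.ext' {p r : ExtEl k A} (h1 : p.c = r.c) (h2 : p.a = r.a) : p = r := by
  cases p; cases r; cases h1; cases h2; rfl

/-- The central extension group attached to a normalized 2-cocycle. -/
def extGroup (β : A → A → kˣ)
    (hc : ∀ x y z : A, β y z * β x (y + z) = β (x + y) z * β x y)
    (h1 : ∀ x, β x 0 = 1) (h2 : ∀ y, β 0 y = 1) : Group (ExtEl k A) where
  mul p r := ⟨p.c * r.c * β p.a r.a, p.a + r.a⟩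
  one := ⟨1, 0⟩
  inv p := ⟨p.c⁻¹ * (β p.a (-p.a))⁻¹, -p.a⟩
  mul_assoc p r s := by
    refine ExtEl.ext' ?_ (add_assoc _ _ _)
    show (p.c * r.c * β p.a r.a) * s.c * β (p.a + r.a) s.a
        = p.c * (r.c * s.c * β r.a s.a) * β p.a (r.a + s.a)
    refine uext ?_
    have h := congrArg (Units.val) (hc p.a r.a s.a)
    simp only [Units.val_mul] at h ⊢
    linear_combination (-(p.c : k) * r.c * s.c) * h
  one_mul p := by
    refine ExtEl.ext' ?_ (zero_add _)
    show (1 : kˣ) * p.c * β 0 p.a = p.c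
    rw [h2, one_mul, mul_one]
  mul_one p := by
    refine ExtEl.ext' ?_ (add_zero _)
    show p.c * 1 * β p.a 0 = p.c
    rw [h1, mul_one, mul_one]
  inv_mul_cancel p := by
    have hsym : β (-p.a) p.a = β p.a (-p.a) := by
      have h := hc p.a (-p.a) p.a
      rw [neg_add_cancel, add_neg_cancel, h1, h2, mul_one, one_mul] at h
      exact h
    refine ExtEl.ext' ?_ (neg_add_cancel _)
    show p.c⁻¹ * (β p.a (-p.a))⁻¹ * p.c * β (-p.a) p.a = 1
    rw [hsym]
    refine uext ?_
    simp only [Units.val_mul, Units.val_inv_eq_inv_val, Units.val_one]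
    field_simp

end Aux

theorem keyLemma {k : Type*} [Field k] [IsAlgClosed k]
    (q : ℕ) (hq : q.Prime)
    (β : ZMod q × ZMod q → ZMod q × ZMod q → kˣ) (hβ : IsAddCocycle2 β)
    (h1 : ∀ x, β x 0 = 1) (h2 : ∀ y, β 0 y = 1) :
    ∃ ξ : kˣ, ξ ^ q = 1 ∧ AddCohomologous2 β (alphaXi q ξ) := by
  haveI : NeZero q := ⟨hq.ne_zero⟩
  letI : Group (ExtEl k (ZMod q × ZMod q)) := extGroup β hβ h1 h2
  -- basic computation lemmas
  have hmulc : ∀ p r : ExtEl k (ZMod q × ZMod q), (p * r).c = p.c * r.c * β p.a r.a :=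
    fun _ _ => rfl
  have hmula : ∀ p r : ExtEl k (ZMod q × ZMod q), (p * r).a = p.a + r.a := fun _ _ => rfl
  have honea : (1 : ExtEl k (ZMod q × ZMod q)).a = 0 := rfl
  -- the central embedding
  set ι : kˣ → ExtEl k (ZMod q × ZMod q) := fun c => ⟨c, 0⟩ with hιdef
  have hι : ∀ (c : kˣ) (p : ExtEl k (ZMod q × ZMod q)), ι c * p = ⟨c * p.c, p.a⟩ := by
    intro c p
    refine ExtEl.ext' ?_ (zero_add _)
    show c * p.c * β 0 p.a = c * p.c
    rw [h2, mul_one]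
  have hι' : ∀ (c : kˣ) (p : ExtEl k (ZMod q × ZMod q)), p * ι c = ⟨p.c * c, p.a⟩ := by
    intro c p
    refine ExtEl.ext' ?_ (add_zero _)
    show p.c * c * β p.a 0 = p.c * c
    rw [h1, mul_one]
  have hιone : ι 1 = 1 := rfl
  have hιinj : ∀ c : kˣ, ι c = 1 → c = 1 := by
    intro c h
    exact congrArg ExtEl.c h
  have hιc : ∀ c : kˣ, (ι c).c = c := fun _ => rfl
  have hιa : ∀ c : kˣ, (ι c).a = 0 := fun _ => rfl
  -- the generators
  set U : ExtEl k (ZMod q × ZMod q) := ⟨1, ((1 : ZMod q), 0)⟩ with hUdef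
  set V : ExtEl k (ZMod q × ZMod q) := ⟨1, (0, (1 : ZMod q))⟩ with hVdef
  have hUa : U.a = ((1 : ZMod q), 0) := rfl
  have hVa : V.a = (0, (1 : ZMod q)) := rfl
  clear_value ι U V
  have hcen : ∀ (c : kˣ) (p : ExtEl k (ZMod q × ZMod q)), Commute (ι c) p := by
    intro c p
    show ι c * p = p * ι c
    rw [hι, hι', mul_comm]
  have hιmul : ∀ c d, ι c * ι d = ι (c * d) := by
    intro c d
    rw [hι]
    exact ExtEl.ext' (by rw [hιc, hιc]) (by rw [hιa, hιa])
  have hιpow : ∀ (c : kˣ) (n : ℕ), (ι c) ^ n = ι (c ^ n) := by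
    intro c n
    induction n with
    | zero => rw [pow_zero, pow_zero, hιone]
    | succ n ih => rw [pow_succ, ih, hιmul, pow_succ]
  have hpa : ∀ (p : ExtEl k (ZMod q × ZMod q)) (n : ℕ), (p ^ n).a = n • p.a := by
    intro p n
    induction n with
    | zero => rw [pow_zero, honea, zero_smul]
    | succ n ih => rw [pow_succ, hmula, ih, succ_nsmul]
  have hιof : ∀ p : ExtEl k (ZMod q × ZMod q), p.a = 0 → p = ι p.c := by
    intro p hp
    exact ExtEl.ext' (by rw [hιc]) (by rw [hιa, hp])
  have hUqa : (U ^ q).a = 0 := by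
    rw [hpa, hUa, Prod.smul_mk, smul_zero, Prod.mk_eq_zero]
    exact ⟨by simp, rfl⟩
  have hVqa : (V ^ q).a = 0 := by
    rw [hpa, hVa, Prod.smul_mk, smul_zero, Prod.mk_eq_zero]
    exact ⟨rfl, by simp⟩
  -- extract q-th roots
  obtain ⟨ru, hru⟩ : ∃ r : kˣ, r ^ q = (U ^ q).c := by
    obtain ⟨z, hz⟩ := IsAlgClosed.exists_pow_nat_eq ((U ^ q).c : k) hq.pos
    have hz0 : z ≠ 0 := by
      intro h; rw [h, zero_pow hq.ne_zero] at hz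
      exact (Units.ne_zero _) hz.symm
    exact ⟨Units.mk0 z hz0, uext (by simpa using hz)⟩
  obtain ⟨rv, hrv⟩ : ∃ r : kˣ, r ^ q = (V ^ q).c := by
    obtain ⟨z, hz⟩ := IsAlgClosed.exists_pow_nat_eq ((V ^ q).c : k) hq.pos
    have hz0 : z ≠ 0 := by
      intro h; rw [h, zero_pow hq.ne_zero] at hz
      exact (Units.ne_zero _) hz.symm
    exact ⟨Units.mk0 z hz0, uext (by simpa using hz)⟩
  obtain ⟨U', hU'def⟩ : ∃ u, u = ι ru⁻¹ * U := ⟨_, rfl⟩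
  obtain ⟨V', hV'def⟩ : ∃ u, u = ι rv⁻¹ * V := ⟨_, rfl⟩
  have hU'a : U'.a = ((1 : ZMod q), 0) := by
    rw [hU'def, hmula, hιa, hUa, zero_add]
  have hV'a : V'.a = (0, (1 : ZMod q)) := by
    rw [hV'def, hmula, hιa, hVa, zero_add]
  have hU'q : U' ^ q = 1 := by
    rw [hU'def, (hcen ru⁻¹ U).mul_pow, hιpow, hιof (U ^ q) hUqa, hιmul, inv_pow, hru,
      inv_mul_cancel, hιone]
  have hV'q : V' ^ q = 1 := by
    rw [hV'def, (hcen rv⁻¹ V).mul_pow, hιpow, hιof (V ^ q) hVqa, hιmul, inv_pow, hrv,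
      inv_mul_cancel, hιone]
  -- the commutator
  obtain ⟨ζ, hζdef⟩ : ∃ z : kˣ, z = (V' * U').c * ((U' * V').c)⁻¹ := ⟨_, rfl⟩
  have hVU : V' * U' = ι ζ * (U' * V') := by
    rw [hι]
    refine ExtEl.ext' ?_ ?_
    · show (V' * U').c = ζ * (U' * V').c
      rw [hζdef, inv_mul_cancel_right]
    · show (V' * U').a = (U' * V').a
      rw [hmula, hmula, add_comm]
  -- commutation relations
  have hcomm1 : ∀ n : ℕ, V' * U' ^ n = ι (ζ ^ n) * (U' ^ n * V') := by
    intro n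
    have hsc : SemiconjBy V' U' (ι ζ * U') := by
      show V' * U' = ι ζ * U' * V'
      rw [hVU, mul_assoc]
    have h' : V' * U' ^ n = (ι ζ * U') ^ n * V' := hsc.pow_right n
    have hmp : (ι ζ * U') ^ n = ι (ζ ^ n) * U' ^ n := by
      rw [(hcen ζ U').mul_pow, hιpow]
    rw [h', hmp, mul_assoc]
  have hcomm2 : ∀ (n m : ℕ), V' ^ m * U' ^ n = ι (ζ ^ (n * m)) * (U' ^ n * V' ^ m) := by
    intro n m
    induction m with
    | zero => simp [hιone]
    | succ m ih =>
      calc V' ^ (m + 1) * U' ^ n = V' ^ m * (V' * U' ^ n) := by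
            rw [pow_succ, mul_assoc]
        _ = V' ^ m * (ι (ζ ^ n) * (U' ^ n * V')) := by rw [hcomm1]
        _ = ι (ζ ^ n) * (V' ^ m * U' ^ n * V') := by
            rw [← mul_assoc, (hcen (ζ ^ n) (V' ^ m)).symm.eq]
            simp only [mul_assoc]
        _ = ι (ζ ^ n) * (ι (ζ ^ (n * m)) * (U' ^ n * V' ^ m) * V') := by rw [ih]
        _ = ι (ζ ^ (n * (m + 1))) * (U' ^ n * V' ^ (m + 1)) := by
            have hnm : n * (m + 1) = n + n * m := by ring
            rw [hnm, pow_add ζ n (n * m), ← hιmul, pow_succ V' m]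
            simp only [mul_assoc]
  have hζq : ζ ^ q = 1 := by
    have h := hcomm1 q
    rw [hU'q, mul_one, one_mul] at h
    have h2 : ι (ζ ^ q) * V' = 1 * V' := by rw [← h, one_mul]
    exact hιinj _ (mul_right_cancel h2)
  -- periodicity
  have hUper : ∀ n : ℕ, U' ^ (n % q) = U' ^ n := by
    intro n
    conv_rhs => rw [← Nat.div_add_mod n q]
    rw [pow_add, pow_mul, hU'q, one_pow, one_mul]
  have hVper : ∀ n : ℕ, V' ^ (n % q) = V' ^ n := by
    intro n
    conv_rhs => rw [← Nat.div_add_mod n q]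
    rw [pow_add, pow_mul, hV'q, one_pow, one_mul]
  -- the section
  set s : ZMod q × ZMod q → ExtEl k (ZMod q × ZMod q) :=
    fun x => U' ^ x.1.val * V' ^ x.2.val with hsdef
  have hsa : ∀ x : ZMod q × ZMod q, (s x).a = x := by
    intro x
    show (U' ^ x.1.val * V' ^ x.2.val).a = x
    rw [hmula, hpa, hpa, hU'a, hV'a, Prod.smul_mk, Prod.smul_mk]
    refine Prod.ext ?_ ?_ <;>
      simp [ZMod.natCast_val, ZMod.cast_id]
  have hkey : ∀ x y : ZMod q × ZMod q,
      s x * s y = ι (ζ ^ (x.2.val * y.1.val)) * s (x + y) := by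
    intro x y
    show U' ^ x.1.val * V' ^ x.2.val * (U' ^ y.1.val * V' ^ y.2.val)
        = ι (ζ ^ (x.2.val * y.1.val)) * (U' ^ (x + y).1.val * V' ^ (x + y).2.val)
    have e1 : (x + y).1.val = (x.1.val + y.1.val) % q := by
      rw [Prod.fst_add, ZMod.val_add]
    have e2 : (x + y).2.val = (x.2.val + y.2.val) % q := by
      rw [Prod.snd_add, ZMod.val_add]
    rw [e1, e2, hUper, hVper]
    calc U' ^ x.1.val * V' ^ x.2.val * (U' ^ y.1.val * V' ^ y.2.val)
        = U' ^ x.1.val * (V' ^ x.2.val * U' ^ y.1.val) * V' ^ y.2.val := by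
          simp only [mul_assoc]
      _ = U' ^ x.1.val * (ι (ζ ^ (y.1.val * x.2.val)) * (U' ^ y.1.val * V' ^ x.2.val))
            * V' ^ y.2.val := by rw [hcomm2]
      _ = ι (ζ ^ (y.1.val * x.2.val)) *
            (U' ^ x.1.val * U' ^ y.1.val * (V' ^ x.2.val * V' ^ y.2.val)) := by
          rw [← mul_assoc (U' ^ x.1.val) (ι (ζ ^ (y.1.val * x.2.val))),
            (hcen (ζ ^ (y.1.val * x.2.val)) (U' ^ x.1.val)).symm.eq]
          simp only [mul_assoc]
      _ = ι (ζ ^ (x.2.val * y.1.val)) *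
            (U' ^ (x.1.val + y.1.val) * V' ^ (x.2.val + y.2.val)) := by
          rw [pow_add, pow_add, mul_comm y.1.val]
  clear_value s
  -- extract the coboundary
  set f : ZMod q × ZMod q → kˣ := fun x => (s x).c with hfdef
  have hrel : ∀ x y : ZMod q × ZMod q,
      f x * f y * β x y = ζ ^ (x.2.val * y.1.val) * f (x + y) := by
    intro x y
    have h := congrArg ExtEl.c (hkey x y)
    rw [hmulc, hsa, hsa, hι] at h
    exact h
  refine ⟨ζ, hζq, fun x => (f x)⁻¹, ?_⟩
  intro x y
  show β x y * (ζ ^ (x.2.val * y.1.val))⁻¹ = (f x)⁻¹ * (f y)⁻¹ * ((f (x + y))⁻¹)⁻¹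
  have h := congrArg Units.val (hrel x y)
  refine uext ?_
  simp only [Units.val_mul, Units.val_inv_eq_inv_val, Units.val_pow_eq_pow_val, inv_inv] at h ⊢
  have hfx : ((f x : k)) ≠ 0 := Units.ne_zero _
  have hfy : ((f y : k)) ≠ 0 := Units.ne_zero _
  have hζ0 : ((ζ : k)) ≠ 0 := Units.ne_zero _
  field_simp
  linear_combination h

theorem statement12 {k : Type*} [Field k] [IsAlgClosed k] [CharZero k]
    (q : ℕ) (hq : q.Prime) :
    (∀ ξ : kˣ, ξ ^ q = 1 → IsAddCocycle2 (alphaXi q ξ)) ∧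
    (∀ ξ ξ' : kˣ, ∀ x y : ZMod q × ZMod q,
      alphaXi q ξ x y * alphaXi q ξ' x y = alphaXi q (ξ * ξ') x y) ∧
    (∀ ξ ξ' : kˣ, ξ ^ q = 1 → ξ' ^ q = 1 →
      (AddCohomologous2 (alphaXi q ξ) (alphaXi q ξ') ↔ ξ = ξ')) ∧
    (∀ β : ZMod q × ZMod q → ZMod q × ZMod q → kˣ, IsAddCocycle2 β →
      ∃ ξ : kˣ, ξ ^ q = 1 ∧ AddCohomologous2 β (alphaXi q ξ)) := by
  haveI : NeZero q := ⟨hq.ne_zero⟩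
  haveI : Fact (1 < q) := ⟨hq.one_lt⟩
  refine ⟨?_, ?_, ?_, ?_⟩
  · -- part 1 : α_ξ is a cocycle
    intro ξ hξ x y z
    have hmod : ∀ n : ℕ, ξ ^ n = ξ ^ (n % q) := by
      intro n
      conv_lhs => rw [← Nat.div_add_mod n q]
      rw [pow_add, pow_mul, hξ, one_pow, one_mul]
    show ξ ^ (y.2.val * z.1.val) * ξ ^ (x.2.val * (y + z).1.val)
        = ξ ^ ((x + y).2.val * z.1.val) * ξ ^ (x.2.val * y.1.val)
    rw [← pow_add, ← pow_add, hmod (y.2.val * z.1.val + x.2.val * (y + z).1.val),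
      hmod ((x + y).2.val * z.1.val + x.2.val * y.1.val)]
    congr 1
    rw [Prod.fst_add, Prod.snd_add, ZMod.val_add, ZMod.val_add]
    show (_ : ℕ) % q = _ % q
    have e1 : (y.1.val + z.1.val) % q ≡ y.1.val + z.1.val [MOD q] := Nat.mod_modEq _ _
    have e2 : (x.2.val + y.2.val) % q ≡ x.2.val + y.2.val [MOD q] := Nat.mod_modEq _ _
    calc y.2.val * z.1.val + x.2.val * ((y.1.val + z.1.val) % q)
        ≡ y.2.val * z.1.val + x.2.val * (y.1.val + z.1.val) [MOD q] :=
          (e1.mul_left x.2.val).add_left _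
      _ = (x.2.val + y.2.val) * z.1.val + x.2.val * y.1.val := by ring
      _ ≡ (x.2.val + y.2.val) % q * z.1.val + x.2.val * y.1.val [MOD q] :=
          ((e2.symm).mul_right z.1.val).add_right _
  · -- part 2 : multiplicativity
    intro ξ ξ' x y
    show ξ ^ (x.2.val * y.1.val) * ξ' ^ (x.2.val * y.1.val) = (ξ * ξ') ^ (x.2.val * y.1.val)
    rw [mul_pow]
  · -- part 3 : cohomologous iff equal
    intro ξ ξ' hξ hξ'
    constructor
    · rintro ⟨f, hf⟩
      have h1 := hf ((0 : ZMod q), (1 : ZMod q)) ((1 : ZMod q), (0 : ZMod q))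
      have h2 := hf ((1 : ZMod q), (0 : ZMod q)) ((0 : ZMod q), (1 : ZMod q))
      simp only [alphaXi, ZMod.val_one, ZMod.val_zero, mul_one, mul_zero, zero_mul,
        pow_one, pow_zero, one_mul] at h1 h2
      have hxy : f (((0 : ZMod q), (1 : ZMod q)) + ((1 : ZMod q), (0 : ZMod q)))
          = f (((1 : ZMod q), (0 : ZMod q)) + ((0 : ZMod q), (1 : ZMod q))) := by
        rw [add_comm]
      have key : ξ * ξ'⁻¹ = (1 : kˣ) := by
        rw [h1, hxy, mul_comm (f ((0 : ZMod q), (1 : ZMod q))) (f ((1 : ZMod q), (0 : ZMod q))),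
          ← h2, inv_one]
      exact mul_inv_eq_one.mp key
    · rintro rfl
      exact ⟨fun _ => 1, by simp⟩
  · -- part 4 : every cocycle is cohomologous to some α_ξ
    intro β hβ
    have hβ0y : ∀ y, β 0 y = β 0 0 := by
      intro y
      have h := hβ 0 0 y
      rw [zero_add, zero_add] at h
      exact mul_left_cancel h
    have hβx0 : ∀ x, β x 0 = β 0 0 := by
      intro x
      have h := hβ x 0 0
      rw [add_zero, add_zero] at h
      exact (mul_right_cancel h).symm
    set c : kˣ := β 0 0 with hcdef
    set βn : ZMod q × ZMod q → ZMod q × ZMod q → kˣ := fun x y => β x y * c⁻¹ with hβndef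
    have hβn : IsAddCocycle2 βn := by
      intro x y z
      show β y z * c⁻¹ * (β x (y + z) * c⁻¹) = β (x + y) z * c⁻¹ * (β x y * c⁻¹)
      rw [mul_mul_mul_comm, mul_mul_mul_comm (β (x + y) z), hβ x y z]
    have h1 : ∀ x, βn x 0 = 1 := by
      intro x
      show β x 0 * c⁻¹ = 1
      rw [hβx0, mul_inv_cancel]
    have h2 : ∀ y, βn 0 y = 1 := by
      intro y
      show β 0 y * c⁻¹ = 1
      rw [hβ0y, mul_inv_cancel]
    obtain ⟨ξ, hξ, f, hf⟩ := keyLemma q hq βn hβn h1 h2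
    refine ⟨ξ, hξ, fun x => f x * c, ?_⟩
    intro x y
    have h := hf x y
    show β x y * (alphaXi q ξ x y)⁻¹ = f x * c * (f y * c) * (f (x + y) * c)⁻¹
    have h' : β x y * c⁻¹ * (alphaXi q ξ x y)⁻¹ = f x * f y * (f (x + y))⁻¹ := h
    refine uext ?_
    have hk := congrArg Units.val h'
    simp only [Units.val_mul, Units.val_inv_eq_inv_val] at hk ⊢
    have hc0 : ((c : k)) ≠ 0 := Units.ne_zero _
    have hα0 : ((alphaXi q ξ x y : kˣ) : k) ≠ 0 := Units.ne_zero _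
    have hf0 : ((f (x + y) : k)) ≠ 0 := Units.ne_zero _
    field_simp at hk ⊢
    linear_combination hk
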